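/- arXiv:2012.00341 — 4 statements merged into one kernel-verified Lean document; each statement's English description precedes it below -/
import Mathlib

section
/- For natural numbers p, a₀, r, d, the sum over all compositions μ = (μ₁,…,μ_d,μ_{d+1}) of r into d+1 parts with μ₁,…,μ_d positive and μ_{d+1} positive, of C(p,μ₁)···C(p,μ_d)·C(a₀,μ_{d+1}), equals the alternating sum over i from 0 to d of (−1)^i·C(d,i)·(C((d−i)·p + a₀, r) − C((d−i)·p, r)). -/
open Finset
lemma sum_antidiagonalTuple_succ {M : Type*} [AddCommMonoid M] (n r : ℕ)
    (g : (Fin (n + 1) → ℕ) → M) :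
    ∑ μ ∈ Finset.Nat.antidiagonalTuple (n + 1) r, g μ =
      ∑ kl ∈ Finset.HasAntidiagonal.antidiagonal r, ∑ ν ∈ Finset.Nat.antidiagonalTuple n kl.2,
        g (Fin.cons kl.1 ν) := by
  rw [Finset.sum_sigma']
  refine Finset.sum_nbij' (i := fun μ => (⟨(μ 0, ∑ i, Fin.tail μ i), Fin.tail μ⟩ :
      Σ _kl : ℕ × ℕ, Fin n → ℕ)) (j := fun x => Fin.cons x.1.1 x.2) ?_ ?_ ?_ ?_ ?_
  · intro μ hμ
    rw [Finset.Nat.mem_antidiagonalTuple] at hμ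
    refine Finset.mem_sigma.2 ⟨?_, ?_⟩
    · simp only [Finset.HasAntidiagonal.mem_antidiagonal]
      rw [← hμ, Fin.sum_univ_succ]
      rfl
    · exact Finset.Nat.mem_antidiagonalTuple.2 rfl
  · rintro ⟨⟨k, l⟩, ν⟩ hx
    rw [Finset.mem_sigma, Finset.HasAntidiagonal.mem_antidiagonal] at hx
    have h2 := Finset.Nat.mem_antidiagonalTuple.1 hx.2
    rw [Finset.Nat.mem_antidiagonalTuple, Fin.sum_univ_succ]
    simp only [Fin.cons_zero, Fin.cons_succ]
    rw [h2]
    exact hx.1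
  · intro μ _
    exact Fin.cons_self_tail μ
  · rintro ⟨⟨k, l⟩, ν⟩ hx
    rw [Finset.mem_sigma] at hx
    have h2 := Finset.Nat.mem_antidiagonalTuple.1 hx.2
    exact Sigma.ext (by simp [h2]) (by simp)
  · intro μ _
    rw [Fin.cons_self_tail μ]

lemma pascal_sum (d : ℕ) (Z : ℕ → ℤ) :
    ∑ i ∈ Finset.range (d + 1), (-1 : ℤ) ^ i * (d.choose i : ℤ) * (Z i - Z (i + 1)) =
      ∑ i ∈ Finset.range (d + 2), (-1 : ℤ) ^ i * ((d + 1).choose i : ℤ) * Z i := by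
  have expand : ∀ i ∈ Finset.range (d + 1),
      (-1 : ℤ) ^ (i + 1) * ((d + 1).choose (i + 1) : ℤ) * Z (i + 1)
        = -((-1) ^ i * (d.choose i : ℤ) * Z (i + 1)) +
          (-1) ^ (i + 1) * (d.choose (i + 1) : ℤ) * Z (i + 1) := by
    intro i _
    rw [Nat.choose_succ_succ]
    push_cast
    ring
  have hR : ∑ i ∈ Finset.range (d + 2), (-1 : ℤ) ^ i * ((d + 1).choose i : ℤ) * Z i
      = -(∑ i ∈ Finset.range (d + 1), (-1 : ℤ) ^ i * (d.choose i : ℤ) * Z (i + 1)) +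
        ((∑ i ∈ Finset.range (d + 1), (-1 : ℤ) ^ (i + 1) * (d.choose (i + 1) : ℤ) * Z (i + 1)) +
          Z 0) := by
    rw [Finset.sum_range_succ' (fun i => (-1 : ℤ) ^ i * ((d + 1).choose i : ℤ) * Z i) (d + 1)]
    rw [Finset.sum_congr rfl expand, Finset.sum_add_distrib, ← Finset.sum_neg_distrib]
    simp [add_assoc]
  have hL1 : ∑ i ∈ Finset.range (d + 1), (-1 : ℤ) ^ i * (d.choose i : ℤ) * Z i
      = (∑ i ∈ Finset.range (d + 1), (-1 : ℤ) ^ (i + 1) * (d.choose (i + 1) : ℤ) * Z (i + 1)) +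
        Z 0 := by
    rw [Finset.sum_range_succ' (fun i => (-1 : ℤ) ^ i * (d.choose i : ℤ) * Z i) d]
    rw [Finset.sum_range_succ (fun i => (-1 : ℤ) ^ (i + 1) * (d.choose (i + 1) : ℤ) * Z (i + 1)) d]
    simp [Nat.choose_succ_self]
  have hL : ∑ i ∈ Finset.range (d + 1), (-1 : ℤ) ^ i * (d.choose i : ℤ) * (Z i - Z (i + 1))
      = (∑ i ∈ Finset.range (d + 1), (-1 : ℤ) ^ i * (d.choose i : ℤ) * Z i) -
        ∑ i ∈ Finset.range (d + 1), (-1 : ℤ) ^ i * (d.choose i : ℤ) * Z (i + 1) := by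
    simp only [mul_sub]
    rw [Finset.sum_sub_distrib]
  rw [hL, hL1, hR]
  ring

lemma vdm (m n r : ℕ) :
    ∑ kl ∈ Finset.HasAntidiagonal.antidiagonal r, (m.choose kl.1 : ℤ) * (n.choose kl.2 : ℤ) =
      ((m + n).choose r : ℤ) := by
  rw [Nat.add_choose_eq]
  push_cast
  rfl

lemma key_lemma (p a : ℕ) : ∀ (d r : ℕ),
    ∑ μ ∈ Finset.Nat.antidiagonalTuple (d + 1) r,
        (∏ i : Fin d, ((p.choose (μ i.castSucc) : ℤ) - ((0 : ℕ).choose (μ i.castSucc) : ℤ))) *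
          (a.choose (μ (Fin.last d)) : ℤ) =
      ∑ i ∈ Finset.range (d + 1),
        (-1 : ℤ) ^ i * (d.choose i : ℤ) * (((d - i) * p + a).choose r : ℤ) := by
  intro d
  induction d with
  | zero => intro r; simp
  | succ d ih =>
    intro r
    rw [sum_antidiagonalTuple_succ]
    have hsummand : ∀ kl : ℕ × ℕ, ∀ ν : Fin (d + 1) → ℕ,
        (∏ i : Fin (d + 1),
            ((p.choose ((Fin.cons kl.1 ν : Fin (d+2) → ℕ) i.castSucc) : ℤ) -
              ((0 : ℕ).choose ((Fin.cons kl.1 ν : Fin (d+2) → ℕ) i.castSucc) : ℤ))) *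
          (a.choose ((Fin.cons kl.1 ν : Fin (d+2) → ℕ) (Fin.last (d+1))) : ℤ) =
        ((p.choose kl.1 : ℤ) - ((0 : ℕ).choose kl.1 : ℤ)) *
          ((∏ i : Fin d, ((p.choose (ν i.castSucc) : ℤ) - ((0 : ℕ).choose (ν i.castSucc) : ℤ))) *
            (a.choose (ν (Fin.last d)) : ℤ)) := by
      intro kl ν
      rw [Fin.prod_univ_succ, ← Fin.succ_last, Fin.cons_succ]
      simp only [Fin.castSucc_zero, Fin.cons_zero, ← Fin.succ_castSucc, Fin.cons_succ]
      ring
    simp_rw [hsummand, ← Finset.mul_sum]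
    simp_rw [ih]
    simp_rw [Finset.mul_sum]
    rw [Finset.sum_comm]
    have hin : ∀ i ∈ Finset.range (d + 1),
        (∑ kl ∈ Finset.HasAntidiagonal.antidiagonal r,
          ((p.choose kl.1 : ℤ) - ((0 : ℕ).choose kl.1 : ℤ)) *
            ((-1 : ℤ) ^ i * (d.choose i : ℤ) * (((d - i) * p + a).choose kl.2 : ℤ))) =
        (-1 : ℤ) ^ i * (d.choose i : ℤ) *
          ((((d + 1 - i) * p + a).choose r : ℤ) - (((d - i) * p + a).choose r : ℤ)) := by
      intro i hi
      rw [Finset.mem_range] at hi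
      have hiz : d + 1 - i = (d - i) + 1 := by omega
      have hc : (d + 1 - i) * p + a = p + ((d - i) * p + a) := by rw [hiz]; ring
      have h1 := vdm p ((d - i) * p + a) r
      have h2 := vdm 0 ((d - i) * p + a) r
      rw [zero_add] at h2
      calc (∑ kl ∈ Finset.HasAntidiagonal.antidiagonal r,
            ((p.choose kl.1 : ℤ) - ((0 : ℕ).choose kl.1 : ℤ)) *
              ((-1 : ℤ) ^ i * (d.choose i : ℤ) * (((d - i) * p + a).choose kl.2 : ℤ)))
          = (-1 : ℤ) ^ i * (d.choose i : ℤ) *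
              ((∑ kl ∈ Finset.HasAntidiagonal.antidiagonal r,
                  (p.choose kl.1 : ℤ) * ((((d - i) * p + a).choose kl.2 : ℤ))) -
                ∑ kl ∈ Finset.HasAntidiagonal.antidiagonal r,
                  ((0 : ℕ).choose kl.1 : ℤ) * ((((d - i) * p + a).choose kl.2 : ℤ))) := by
            rw [← Finset.sum_sub_distrib, Finset.mul_sum]
            exact Finset.sum_congr rfl fun kl _ => by ring
        _ = (-1 : ℤ) ^ i * (d.choose i : ℤ) *
              ((((d + 1 - i) * p + a).choose r : ℤ) - (((d - i) * p + a).choose r : ℤ)) := by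
            rw [h1, h2, hc]
    rw [Finset.sum_congr rfl hin]
    have hp := pascal_sum d (fun i => (((d + 1 - i) * p + a).choose r : ℤ))
    simp only [Nat.succ_sub_succ] at hp
    exact hp

/-- Sum over compositions of `r` into `d+1` positive parts with last factor `C(a₀,·)`. -/
theorem sum_pos_compositions_choose_last (p a₀ r d : ℕ) :
    ∑ μ ∈ (Finset.Nat.antidiagonalTuple (d + 1) r).filter (fun μ => ∀ i, 0 < μ i),
        (∏ i : Fin d, (p.choose (μ i.castSucc) : ℤ)) * (a₀.choose (μ (Fin.last d)) : ℤ) =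
      ∑ i ∈ Finset.range (d + 1),
        (-1 : ℤ) ^ i * (d.choose i : ℤ) *
          ((((d - i) * p + a₀).choose r : ℤ) - (((d - i) * p).choose r : ℤ)) := by
  have hind : ∑ μ ∈ (Finset.Nat.antidiagonalTuple (d + 1) r).filter (fun μ => ∀ i, 0 < μ i),
        (∏ i : Fin d, (p.choose (μ i.castSucc) : ℤ)) * (a₀.choose (μ (Fin.last d)) : ℤ) =
      ∑ μ ∈ Finset.Nat.antidiagonalTuple (d + 1) r,
        (∏ i : Fin d, ((p.choose (μ i.castSucc) : ℤ) - ((0 : ℕ).choose (μ i.castSucc) : ℤ))) *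
          ((a₀.choose (μ (Fin.last d)) : ℤ) - ((0 : ℕ).choose (μ (Fin.last d)) : ℤ)) := by
    rw [Finset.sum_filter]
    refine Finset.sum_congr rfl fun μ _ => ?_
    by_cases h : ∀ i, 0 < μ i
    · rw [if_pos h]
      have hz : ∀ i : Fin (d + 1), ((0 : ℕ).choose (μ i) : ℤ) = 0 := fun i => by
        rw [Nat.choose_eq_zero_of_lt (h i)]; rfl
      simp [hz]
    · rw [if_neg h]
      push_neg at h
      obtain ⟨i, hi⟩ := h
      have hi0 : μ i = 0 := Nat.le_zero.1 hi
      rcases Fin.eq_castSucc_or_eq_last i with ⟨j, rfl⟩ | rfl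
      · rw [Finset.prod_eq_zero (Finset.mem_univ j) (by simp [hi0]), zero_mul]
      · rw [hi0]
        simp
  rw [hind]
  simp_rw [mul_sub]
  rw [Finset.sum_sub_distrib, key_lemma p a₀ d r, key_lemma p 0 d r, ← Finset.sum_sub_distrib]
  refine Finset.sum_congr rfl fun i _ => ?_
  rw [Nat.add_zero]
end

section
/- For natural numbers p, a₀, r, d: the sum over compositions of r into d positive parts of C(p,μ₁)···C(p,μ_d), plus the sum over compositions of r into d+1 positive parts of C(p,μ₁)···C(p,μ_d)·C(a₀,μ_{d+1}), equals the alternating sum over i from 0 to d of (−1)^i·C(d,i)·C((d−i)·p + a₀, r). -/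
open Finset Finset.Nat

lemma tuple_sum_cons {M : Type*} [AddCommMonoid M] (k n : ℕ) (f : (Fin (k+1) → ℕ) → M) :
    ∑ μ ∈ antidiagonalTuple (k+1) n, f μ =
      ∑ xy ∈ antidiagonal n, ∑ ν ∈ antidiagonalTuple k xy.2, f (Fin.cons xy.1 ν) := by
  rw [Finset.sum_sigma']
  refine Finset.sum_bij' (fun μ _ => ⟨(μ 0, ∑ i : Fin k, μ i.succ), Fin.tail μ⟩)
    (fun x _ => Fin.cons x.1.1 x.2) ?_ ?_ ?_ ?_ ?_
  · intro μ hμ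
    rw [mem_antidiagonalTuple, Fin.sum_univ_succ] at hμ
    simp only [Finset.mem_sigma, HasAntidiagonal.mem_antidiagonal, mem_antidiagonalTuple]
    exact ⟨hμ, rfl⟩
  · intro x hx
    simp only [Finset.mem_sigma, HasAntidiagonal.mem_antidiagonal, mem_antidiagonalTuple] at hx ⊢
    rw [Fin.sum_univ_succ]
    simp [hx.2, hx.1]
  · intro μ hμ
    exact Fin.cons_self_tail μ
  · intro x hx
    simp only [Finset.mem_sigma, HasAntidiagonal.mem_antidiagonal, mem_antidiagonalTuple] at hx
    ext <;> simp [Fin.tail, hx.2]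
  · intro μ hμ
    rw [Fin.cons_self_tail]

lemma alt_sum (d : ℕ) (A : ℕ → ℤ) :
    (∑ i ∈ range (d+1), (-1:ℤ)^i * (d.choose i : ℤ) * A i) -
      (∑ i ∈ range (d+1), (-1:ℤ)^i * (d.choose i : ℤ) * A (i+1)) =
    ∑ i ∈ range (d+2), (-1:ℤ)^i * ((d+1).choose i : ℤ) * A i := by
  rw [Finset.sum_range_succ' (fun i => (-1:ℤ)^i * ((d+1).choose i : ℤ) * A i) (d+1)]
  simp only [Nat.choose_succ_succ, Nat.cast_add, pow_succ, Nat.choose_zero_right, Nat.cast_one,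
    pow_zero, one_mul, mul_one]
  rw [show (∑ i ∈ range (d+1), (-1:ℤ)^i * (-1) * ((d.choose i : ℤ) + (d.choose (i+1) : ℤ)) * A (i+1))
      = (∑ i ∈ range (d+1), (-1:ℤ)^(i+1) * (d.choose (i+1) : ℤ) * A (i+1))
        - ∑ i ∈ range (d+1), (-1:ℤ)^i * (d.choose i : ℤ) * A (i+1) by
    rw [← Finset.sum_sub_distrib]; exact Finset.sum_congr rfl fun i _ => by rw [pow_succ]; ring]
  rw [Finset.sum_range_succ (fun i => (-1:ℤ)^(i+1) * (d.choose (i+1) : ℤ) * A (i+1)) d]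
  rw [Nat.choose_succ_self]
  rw [Finset.sum_range_succ' (fun i => (-1:ℤ)^i * (d.choose i : ℤ) * A i) d]
  simp only [Nat.cast_zero, Nat.choose_zero_right, Nat.cast_one]
  ring

lemma key (p m : ℕ) : ∀ d r : ℕ,
    (∑ μ ∈ (antidiagonalTuple (d+1) r).filter (fun μ => ∀ i : Fin d, 0 < μ i.castSucc),
        (∏ i : Fin d, (p.choose (μ i.castSucc) : ℤ)) * (m.choose (μ (Fin.last d)) : ℤ)) =
      ∑ i ∈ range (d+1), (-1:ℤ)^i * (d.choose i : ℤ) * (((d-i)*p + m).choose r : ℤ)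
  | 0, r => by
    rw [Finset.filter_true_of_mem (fun _ _ => fun i => i.elim0)]
    simp [antidiagonalTuple_one]
  | d+1, r => by
    rw [Finset.sum_filter, tuple_sum_cons]
    have hsum : ∀ xy : ℕ × ℕ,
        (∑ ν ∈ antidiagonalTuple (d+1) xy.2,
          if (∀ i : Fin (d+1), 0 < (Fin.cons xy.1 ν : Fin (d+2) → ℕ) i.castSucc) then
            (∏ i : Fin (d+1), (p.choose ((Fin.cons xy.1 ν : Fin (d+2) → ℕ) i.castSucc) : ℤ)) *
              (m.choose ((Fin.cons xy.1 ν : Fin (d+2) → ℕ) (Fin.last (d+1))) : ℤ) else 0)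
        = if 0 < xy.1 then (p.choose xy.1 : ℤ) *
            ∑ i ∈ range (d+1), (-1:ℤ)^i * (d.choose i : ℤ) * (((d-i)*p + m).choose xy.2 : ℤ)
          else 0 := by
      intro xy
      rw [← key p m d xy.2, Finset.sum_filter]
      simp only [Fin.forall_fin_succ, Fin.prod_univ_succ, Fin.castSucc_zero, Fin.cons_zero,
        ← Fin.succ_castSucc, Fin.cons_succ, ← Fin.succ_last]
      by_cases hx : 0 < xy.1
      · simp only [hx, true_and, if_true, Finset.mul_sum]
        refine Finset.sum_congr rfl fun ν _ => ?_
        by_cases hν : ∀ i : Fin d, 0 < ν i.castSucc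
        · simp only [if_pos hν]; ring
        · simp only [if_neg hν, mul_zero]
      · simp [hx]
    rw [Finset.sum_congr rfl fun xy _ => hsum xy]
    -- split off the xy.1 = 0 term
    have split : ∀ xy : ℕ × ℕ, (if 0 < xy.1 then (p.choose xy.1 : ℤ) *
            ∑ i ∈ range (d+1), (-1:ℤ)^i * (d.choose i : ℤ) * (((d-i)*p + m).choose xy.2 : ℤ)
          else 0)
        = (p.choose xy.1 : ℤ) *
            (∑ i ∈ range (d+1), (-1:ℤ)^i * (d.choose i : ℤ) * (((d-i)*p + m).choose xy.2 : ℤ))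
          - (if xy.1 = 0 then
              ∑ i ∈ range (d+1), (-1:ℤ)^i * (d.choose i : ℤ) * (((d-i)*p + m).choose xy.2 : ℤ)
            else 0) := by
      intro xy
      rcases Nat.eq_zero_or_pos xy.1 with h | h
      · simp [h]
      · simp [h, Nat.pos_iff_ne_zero.mp h]
    rw [Finset.sum_congr rfl fun xy _ => split xy, Finset.sum_sub_distrib]
    have hzero : (∑ xy ∈ antidiagonal r, if xy.1 = 0 then
        ∑ i ∈ range (d+1), (-1:ℤ)^i * (d.choose i : ℤ) * (((d-i)*p + m).choose xy.2 : ℤ) else 0)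
        = ∑ i ∈ range (d+1), (-1:ℤ)^i * (d.choose i : ℤ) * (((d-i)*p + m).choose r : ℤ) := by
      rw [Finset.sum_eq_single_of_mem (0, r)]
      · simp
      · simp [HasAntidiagonal.mem_antidiagonal]
      · rintro ⟨x, y⟩ hb hne
        simp only [HasAntidiagonal.mem_antidiagonal] at hb
        have : ¬ x = 0 := fun h => hne (by simp [h, ← hb, Prod.ext_iff])
        simp [this]
    rw [hzero]
    have hvdm : (∑ xy ∈ antidiagonal r, (p.choose xy.1 : ℤ) *
        ∑ i ∈ range (d+1), (-1:ℤ)^i * (d.choose i : ℤ) * (((d-i)*p + m).choose xy.2 : ℤ))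
        = ∑ i ∈ range (d+1), (-1:ℤ)^i * (d.choose i : ℤ) * (((d+1-i)*p + m).choose r : ℤ) := by
      simp_rw [Finset.mul_sum]
      rw [Finset.sum_comm]
      refine Finset.sum_congr rfl fun i hi => ?_
      have hi' : i ≤ d := by simpa using Nat.lt_succ_iff.mp (Finset.mem_range.mp hi)
      have : (d+1-i)*p + m = p + ((d-i)*p + m) := by
        have : d + 1 - i = (d - i) + 1 := by omega
        rw [this]; ring
      rw [this, Nat.add_choose_eq]
      push_cast
      rw [Finset.mul_sum]
      exact Finset.sum_congr rfl fun xy _ => by ring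
    rw [hvdm]
    have := alt_sum d (fun i => (((d+1-i)*p + m).choose r : ℤ))
    simp only [Nat.succ_sub_succ] at this
    rw [← this]

lemma sum_last_zero (p d r : ℕ) :
    (∑ μ ∈ (antidiagonalTuple (d+1) r).filter
        (fun μ => (∀ i : Fin d, 0 < μ i.castSucc) ∧ μ (Fin.last d) = 0),
        ∏ i : Fin d, (p.choose (μ i.castSucc) : ℤ))
    = ∑ ν ∈ (antidiagonalTuple d r).filter (fun ν => ∀ i, 0 < ν i),
        ∏ i, (p.choose (ν i) : ℤ) := by
  refine Finset.sum_nbij' (fun μ => fun i => μ i.castSucc)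
    (fun ν => Fin.snoc ν 0) ?_ ?_ ?_ ?_ ?_
  · intro μ hμ
    simp only [Finset.mem_filter, mem_antidiagonalTuple] at hμ ⊢
    obtain ⟨hsum, hpos, hlast⟩ := hμ
    refine ⟨?_, hpos⟩
    rw [Fin.sum_univ_castSucc, hlast, add_zero] at hsum
    exact hsum
  · intro ν hν
    simp only [Finset.mem_filter, mem_antidiagonalTuple] at hν ⊢
    refine ⟨?_, fun i => by simpa [Fin.snoc_castSucc] using hν.2 i, by simp⟩
    rw [Fin.sum_univ_castSucc]
    simp [Fin.snoc_castSucc, hν.1]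
  · intro μ hμ
    simp only [Finset.mem_filter] at hμ
    funext j
    refine Fin.lastCases ?_ (fun i => ?_) j
    · simp [hμ.2.2]
    · simp [Fin.snoc_castSucc]
  · intro ν hν
    funext i
    simp [Fin.snoc_castSucc]
  · intro μ hμ
    rfl

/-- Adding the two composition sums gives a single alternating sum. -/
theorem sum_pos_compositions_add (p a₀ r d : ℕ) :
    (∑ μ ∈ (Finset.Nat.antidiagonalTuple d r).filter (fun μ => ∀ i, 0 < μ i),
        ∏ i, (p.choose (μ i) : ℤ)) +
      ∑ μ ∈ (Finset.Nat.antidiagonalTuple (d + 1) r).filter (fun μ => ∀ i, 0 < μ i),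
        (∏ i : Fin d, (p.choose (μ i.castSucc) : ℤ)) * (a₀.choose (μ (Fin.last d)) : ℤ) =
      ∑ i ∈ Finset.range (d + 1),
        (-1 : ℤ) ^ i * (d.choose i : ℤ) * (((d - i) * p + a₀).choose r : ℤ) := by
  rw [← key p a₀ d r]
  rw [← Finset.sum_filter_add_sum_filter_not
    ((antidiagonalTuple (d+1) r).filter (fun μ => ∀ i : Fin d, 0 < μ i.castSucc))
    (fun μ => μ (Fin.last d) = 0)]
  congr 1
  · rw [Finset.filter_filter, ← sum_last_zero p d r]
    refine Finset.sum_congr rfl fun μ hμ => ?_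
    have h0 : μ (Fin.last d) = 0 := (Finset.mem_filter.mp hμ).2.2
    rw [h0, Nat.choose_zero_right, Nat.cast_one, mul_one]
  · rw [Finset.filter_filter]
    refine Finset.sum_congr (Finset.filter_congr fun μ _ => ?_) fun _ _ => rfl
    simp [Fin.forall_fin_succ', Nat.pos_iff_ne_zero]
end

section
/- Let p ≥ 1, k ≥ 1, a₀ be natural numbers and set n = k·p + a₀. Then k + (k−1)·Σ_{μ⊨p into 2 positive parts} C(p,μ₁)·C(a₀,μ₂) + Σ_{d=2}^{k−1} C(k−1,d)·( Σ_{μ⊨p into d positive parts} C(p,μ₁)···C(p,μ_d) + Σ_{μ⊨p into d+1 positive parts} C(p,μ₁)···C(p,μ_d)·C(a₀,μ_{d+1}) ) = 1 + C(n−p, p). -/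
open Finset Finset.Nat

variable {M : Type*} [AddCommMonoid M]

lemma sum_adt_cons (d r : ℕ) (f : (Fin (d + 1) → ℕ) → M) :
    ∑ μ ∈ antidiagonalTuple (d + 1) r, f μ =
      ∑ ij ∈ antidiagonal r, ∑ ν ∈ antidiagonalTuple d ij.2, f (Fin.cons ij.1 ν) := by
  rw [Finset.sum_sigma']
  refine Finset.sum_nbij' (fun μ => ⟨(μ 0, ∑ i, Fin.tail μ i), Fin.tail μ⟩)
    (fun x => Fin.cons x.1.1 x.2) ?_ ?_ ?_ ?_ ?_
  · intro μ hμ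
    rw [mem_antidiagonalTuple] at hμ
    simp only [Finset.mem_sigma, Finset.HasAntidiagonal.mem_antidiagonal, mem_antidiagonalTuple]
    exact ⟨by rw [← hμ, Fin.sum_univ_succ]; rfl, trivial⟩
  · rintro ⟨⟨a, b⟩, ν⟩ hx
    simp only [Finset.mem_sigma, Finset.HasAntidiagonal.mem_antidiagonal, mem_antidiagonalTuple] at hx
    rw [mem_antidiagonalTuple, Fin.sum_cons, hx.2, hx.1]
  · intro μ hμ
    exact Fin.cons_self_tail μ
  · rintro ⟨⟨a, b⟩, ν⟩ hx
    simp only [Finset.mem_sigma, Finset.HasAntidiagonal.mem_antidiagonal, mem_antidiagonalTuple] at hx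
    simp [Fin.tail_cons, hx.2]
  · intro μ hμ
    rw [Fin.cons_self_tail]

lemma sum_adt_snoc (d r : ℕ) (f : (Fin (d + 1) → ℕ) → M) :
    ∑ μ ∈ antidiagonalTuple (d + 1) r, f μ =
      ∑ ij ∈ antidiagonal r, ∑ ν ∈ antidiagonalTuple d ij.1, f (Fin.snoc ν ij.2) := by
  rw [Finset.sum_sigma']
  refine Finset.sum_nbij' (fun μ => ⟨(∑ i, Fin.init μ i, μ (Fin.last d)), Fin.init μ⟩)
    (fun x => Fin.snoc x.2 x.1.2) ?_ ?_ ?_ ?_ ?_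
  · intro μ hμ
    rw [mem_antidiagonalTuple] at hμ
    simp only [Finset.mem_sigma, Finset.HasAntidiagonal.mem_antidiagonal, mem_antidiagonalTuple]
    exact ⟨by rw [← hμ, Fin.sum_univ_castSucc]; rfl, trivial⟩
  · rintro ⟨⟨a, b⟩, ν⟩ hx
    simp only [Finset.mem_sigma, Finset.HasAntidiagonal.mem_antidiagonal, mem_antidiagonalTuple] at hx
    rw [mem_antidiagonalTuple, Fin.sum_univ_castSucc]
    simp only [Fin.snoc_castSucc, Fin.snoc_last]
    rw [hx.2, hx.1]
  · intro μ hμ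
    exact Fin.snoc_init_self μ
  · rintro ⟨⟨a, b⟩, ν⟩ hx
    simp only [Finset.mem_sigma, Finset.HasAntidiagonal.mem_antidiagonal, mem_antidiagonalTuple] at hx
    simp [Fin.init_snoc, hx.2]
  · intro μ hμ
    rw [Fin.snoc_init_self]

lemma vandermonde_tuple : ∀ (d : ℕ) (w : Fin d → ℕ) (r : ℕ),
    ∑ μ ∈ antidiagonalTuple d r, ∏ i, (w i).choose (μ i) = (∑ i, w i).choose r := by
  intro d
  induction d with
  | zero =>
    intro w r
    cases r with
    | zero => simp
    | succ r => simp [antidiagonalTuple_zero_succ, Nat.choose_eq_zero_of_lt]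
  | succ d ih =>
    intro w r
    rw [sum_adt_cons]
    rw [Fin.sum_univ_succ, Nat.add_choose_eq]
    refine Finset.sum_congr rfl fun ij _ => ?_
    rw [← ih (fun i => w i.succ) ij.2, Finset.mul_sum]
    refine Finset.sum_congr rfl fun ν _ => ?_
    rw [Fin.prod_univ_succ]
    simp

/-- Sum over compositions of `r` into `d` strictly positive parts of `∏ C(p, μᵢ)`. -/
def posCompSum (p r d : ℕ) : ℕ :=
  ∑ μ ∈ (Finset.Nat.antidiagonalTuple d r).filter (fun μ => ∀ i, 0 < μ i),
    ∏ i, p.choose (μ i)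

/-- Sum over compositions of `r` into `d+1` strictly positive parts of
`C(p,μ₁)⋯C(p,μ_d)·C(a₀,μ_{d+1})`. -/
def posCompSum' (p a₀ r d : ℕ) : ℕ :=
  ∑ μ ∈ (Finset.Nat.antidiagonalTuple (d + 1) r).filter (fun μ => ∀ i, 0 < μ i),
    (∏ i : Fin d, p.choose (μ i.castSucc)) * a₀.choose (μ (Fin.last d))

lemma posCompSum_zero (p r : ℕ) : posCompSum p r 0 = if r = 0 then 1 else 0 := by
  unfold posCompSum
  cases r with
  | zero => simp [antidiagonalTuple_zero_right]
  | succ r => simp [antidiagonalTuple_zero_succ]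

lemma posCompSum_one (p r : ℕ) (hr : 0 < r) : posCompSum p r 1 = p.choose r := by
  unfold posCompSum
  rw [antidiagonalTuple_one]
  rw [Finset.filter_singleton]
  have : ∀ i : Fin 1, 0 < (![r] : Fin 1 → ℕ) i := by
    intro i
    fin_cases i <;> simpa
  rw [if_pos this]
  simp

lemma posCompSum_succ (p r d : ℕ) :
    posCompSum p r (d + 1) =
      ∑ ij ∈ antidiagonal r, if 0 < ij.1 then p.choose ij.1 * posCompSum p ij.2 d else 0 := by
  unfold posCompSum
  rw [Finset.sum_filter, sum_adt_cons]
  refine Finset.sum_congr rfl fun ij _ => ?_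
  have h1 : ∀ ν : Fin d → ℕ, (∀ i, 0 < Fin.cons (α := fun _ => ℕ) ij.1 ν i) ↔
      (0 < ij.1 ∧ ∀ i, 0 < ν i) := by
    intro ν
    rw [Fin.forall_fin_succ]
    simp
  by_cases h : 0 < ij.1
  · rw [if_pos h, Finset.sum_filter, Finset.mul_sum]
    refine Finset.sum_congr rfl fun ν _ => ?_
    simp only [h1 ν]
    by_cases h2 : ∀ i, 0 < ν i
    · rw [if_pos ⟨h, h2⟩, if_pos h2, Fin.prod_univ_succ]
      simp
    · rw [if_neg (by tauto), if_neg h2, mul_zero]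
  · rw [if_neg h]
    refine Finset.sum_eq_zero fun ν _ => ?_
    simp only [h1 ν]
    rw [if_neg (by tauto)]

lemma choose_split (c : ℕ → ℕ) (hc : c 0 = 1) (g : ℕ → ℕ) (r : ℕ) :
    ∑ ij ∈ antidiagonal r, c ij.1 * g ij.2 =
      g r + ∑ ij ∈ antidiagonal r, if 0 < ij.1 then c ij.1 * g ij.2 else 0 := by
  have : ∀ ij ∈ antidiagonal r, c ij.1 * g ij.2 =
      (if ij = ((0 : ℕ), r) then g r else 0) + (if 0 < ij.1 then c ij.1 * g ij.2 else 0) := by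
    rintro ⟨a, b⟩ hab
    rw [Finset.HasAntidiagonal.mem_antidiagonal] at hab
    rcases Nat.eq_zero_or_pos a with h | h
    · subst h
      simp at hab
      subst hab
      simp [hc]
    · rw [if_neg (by rintro h'; rw [Prod.mk.injEq] at h'; omega), if_pos h]
      simp
  rw [Finset.sum_congr rfl this, Finset.sum_add_distrib, Finset.sum_ite_eq' (antidiagonal r) ((0 : ℕ), r) (fun _ => g r)]
  rw [if_pos (by rw [Finset.HasAntidiagonal.mem_antidiagonal]; simp)]

lemma choose_split' (c : ℕ → ℕ) (g : ℕ → ℕ) (hg : g 0 = 1) (r : ℕ) :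
    ∑ ij ∈ antidiagonal r, c ij.1 * g ij.2 =
      c r + ∑ ij ∈ antidiagonal r, if 0 < ij.2 then c ij.1 * g ij.2 else 0 := by
  have : ∀ ij ∈ antidiagonal r, c ij.1 * g ij.2 =
      (if ij = (r, (0 : ℕ)) then c r else 0) + (if 0 < ij.2 then c ij.1 * g ij.2 else 0) := by
    rintro ⟨a, b⟩ hab
    rw [Finset.HasAntidiagonal.mem_antidiagonal] at hab
    rcases Nat.eq_zero_or_pos b with h | h
    · subst h
      simp at hab
      subst hab
      simp [hg]
    · rw [if_neg (by rintro h'; rw [Prod.mk.injEq] at h'; omega), if_pos h]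
      simp
  rw [Finset.sum_congr rfl this, Finset.sum_add_distrib,
    Finset.sum_ite_eq' (antidiagonal r) ((r : ℕ), (0 : ℕ)) (fun _ => c r)]
  rw [if_pos (by rw [Finset.HasAntidiagonal.mem_antidiagonal]; simp)]

lemma pos_rec (p j r : ℕ) :
    posCompSum p r j + posCompSum p r (j + 1) =
      ∑ ij ∈ antidiagonal r, p.choose ij.1 * posCompSum p ij.2 j := by
  rw [choose_split p.choose (by simp) (fun u => posCompSum p u j) r, posCompSum_succ]

lemma sum_choose_posCompSum (p : ℕ) : ∀ (m r : ℕ),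
    ∑ j ∈ Finset.range (m + 1), m.choose j * posCompSum p r j = (m * p).choose r := by
  intro m
  induction m with
  | zero =>
    intro r
    rw [Finset.sum_range_one, posCompSum_zero]
    cases r <;> simp
  | succ m ih =>
    intro r
    have key : ∑ j ∈ Finset.range (m + 1),
        m.choose j * (posCompSum p r j + posCompSum p r (j + 1)) = ((m + 1) * p).choose r := by
      have : ∀ j ∈ Finset.range (m + 1),
          m.choose j * (posCompSum p r j + posCompSum p r (j + 1)) =
          ∑ ij ∈ antidiagonal r, p.choose ij.1 * (m.choose j * posCompSum p ij.2 j) := by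
        intro j _
        rw [pos_rec, Finset.mul_sum]
        exact Finset.sum_congr rfl fun ij _ => by ring
      rw [Finset.sum_congr rfl this, Finset.sum_comm]
      have : ∀ ij ∈ antidiagonal r,
          ∑ j ∈ Finset.range (m + 1), p.choose ij.1 * (m.choose j * posCompSum p ij.2 j) =
          p.choose ij.1 * (m * p).choose ij.2 := by
        intro ij _
        rw [← Finset.mul_sum, ih ij.2]
      rw [Finset.sum_congr rfl this, ← Nat.add_choose_eq]
      congr 1
      ring
    have hT : ∑ j ∈ Finset.range (m + 2), (m + 1).choose j * posCompSum p r j =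
        (∑ j ∈ Finset.range (m + 1), m.choose j * posCompSum p r j) +
        ∑ j ∈ Finset.range (m + 1), m.choose j * posCompSum p r (j + 1) := by
      rw [Finset.sum_range_succ' _ (m + 1)]
      have : ∀ j ∈ Finset.range (m + 1), (m + 1).choose (j + 1) * posCompSum p r (j + 1) =
          m.choose j * posCompSum p r (j + 1) + m.choose (j + 1) * posCompSum p r (j + 1) := by
        intro j _
        rw [Nat.choose_succ_succ, Nat.add_mul]
      rw [Finset.sum_congr rfl this, Finset.sum_add_distrib]
      have h2 : (∑ j ∈ Finset.range (m + 1), m.choose (j + 1) * posCompSum p r (j + 1)) +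
          m.choose 0 * posCompSum p r 0 =
          ∑ j ∈ Finset.range (m + 1), m.choose j * posCompSum p r j := by
        have h3 := (Finset.sum_range_succ' (fun j => m.choose j * posCompSum p r j) (m + 1)).symm
        nth_rewrite 2 [Finset.sum_range_succ] at h3
        simpa [Nat.choose_succ_self] using h3
      rw [Nat.choose_zero_right] at h2 ⊢
      omega
    rw [hT, ← key]
    rw [← Finset.sum_add_distrib]
    exact Finset.sum_congr rfl fun j _ => by ring

lemma posCompSum'_eq (p a₀ r d : ℕ) :
    posCompSum' p a₀ r d =
      ∑ ij ∈ antidiagonal r, if 0 < ij.2 then posCompSum p ij.1 d * a₀.choose ij.2 else 0 := by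
  unfold posCompSum'
  rw [Finset.sum_filter, sum_adt_snoc]
  refine Finset.sum_congr rfl fun ij _ => ?_
  have h1 : ∀ ν : Fin d → ℕ, (∀ i, 0 < Fin.snoc (α := fun _ => ℕ) ν ij.2 i) ↔
      ((∀ i, 0 < ν i) ∧ 0 < ij.2) := by
    intro ν
    rw [Fin.forall_fin_succ']
    simp
  by_cases h : 0 < ij.2
  · rw [if_pos h]
    unfold posCompSum
    rw [Finset.sum_filter, Finset.sum_mul]
    refine Finset.sum_congr rfl fun ν _ => ?_
    simp only [h1 ν]
    by_cases h2 : ∀ i, 0 < ν i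
    · rw [if_pos ⟨h2, h⟩, if_pos h2]
      simp
    · rw [if_neg (by tauto), if_neg h2, zero_mul]
  · rw [if_neg h]
    refine Finset.sum_eq_zero fun ν _ => ?_
    simp only [h1 ν]
    rw [if_neg (by tauto)]

lemma sum_choose_posCompSum' (p a₀ m r : ℕ) :
    (∑ j ∈ Finset.range (m + 1), m.choose j * posCompSum' p a₀ r j) + (m * p).choose r =
      (m * p + a₀).choose r := by
  have h1 : ∑ j ∈ Finset.range (m + 1), m.choose j * posCompSum' p a₀ r j =
      ∑ ij ∈ antidiagonal r, if 0 < ij.2 then (m * p).choose ij.1 * a₀.choose ij.2 else 0 := by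
    have e1 : ∀ j ∈ Finset.range (m + 1), m.choose j * posCompSum' p a₀ r j =
        ∑ ij ∈ antidiagonal r,
          if 0 < ij.2 then (m.choose j * posCompSum p ij.1 j) * a₀.choose ij.2 else 0 := by
      intro j _
      rw [posCompSum'_eq, Finset.mul_sum]
      refine Finset.sum_congr rfl fun ij _ => ?_
      rw [mul_ite, mul_zero, mul_assoc]
    rw [Finset.sum_congr rfl e1, Finset.sum_comm]
    refine Finset.sum_congr rfl fun ij _ => ?_
    by_cases h : 0 < ij.2
    · simp only [if_pos h]
      rw [← Finset.sum_mul, sum_choose_posCompSum p m ij.1]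
    · simp [if_neg h]
  have h2 := choose_split' (m * p).choose a₀.choose (by simp) r
  rw [← Nat.add_choose_eq] at h2
  omega

lemma posCompSum'_zero (p a₀ r : ℕ) (hr : 0 < r) : posCompSum' p a₀ r 0 = a₀.choose r := by
  unfold posCompSum'
  rw [antidiagonalTuple_one, Finset.filter_singleton]
  have : ∀ i : Fin 1, 0 < (![r] : Fin 1 → ℕ) i := by
    intro i
    fin_cases i <;> simpa
  rw [if_pos this]
  simp

/-- Theorem A.8 of the paper (case `r = p`). -/
theorem gamma_case_r_eq_p (p k a₀ n : ℕ) (hp : 1 ≤ p) (hk : 1 ≤ k) (ha : a₀ < p)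
    (hn : n = k * p + a₀) :
    k + (k - 1) * posCompSum' p a₀ p 1 +
        ∑ d ∈ Finset.Icc 2 (k - 1),
          (k - 1).choose d * (posCompSum p p d + posCompSum' p a₀ p d) =
      1 + (n - p).choose p := by
  obtain ⟨m, rfl⟩ : ∃ m, k = m + 1 := ⟨k - 1, by omega⟩
  have hkm : m + 1 - 1 = m := by omega
  rw [hkm]
  have hnp : n - p = m * p + a₀ := by
    rw [hn, add_mul, one_mul]
    omega
  rw [hnp]
  have hS : (∑ j ∈ Finset.range (m + 1),
      m.choose j * (posCompSum p p j + posCompSum' p a₀ p j)) = (m * p + a₀).choose p := by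
    have hA := sum_choose_posCompSum p m p
    have hB := sum_choose_posCompSum' p a₀ m p
    have : ∀ j ∈ Finset.range (m + 1),
        m.choose j * (posCompSum p p j + posCompSum' p a₀ p j) =
        m.choose j * posCompSum p p j + m.choose j * posCompSum' p a₀ p j := fun j _ => by ring
    rw [Finset.sum_congr rfl this, Finset.sum_add_distrib, hA]
    omega
  rcases Nat.eq_zero_or_pos m with hm | hm
  · subst hm
    rw [show Finset.Icc 2 0 = ∅ by rfl]
    simp [Nat.choose_eq_zero_of_lt ha]
  · -- split the sum
    have hsplit : (∑ j ∈ Finset.range (m + 1),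
        m.choose j * (posCompSum p p j + posCompSum' p a₀ p j)) =
        m.choose 0 * (posCompSum p p 0 + posCompSum' p a₀ p 0) +
        (m.choose 1 * (posCompSum p p 1 + posCompSum' p a₀ p 1) +
        ∑ j ∈ Finset.Icc 2 m, m.choose j * (posCompSum p p j + posCompSum' p a₀ p j)) := by
      rw [Finset.range_eq_Ico,
        Finset.sum_eq_sum_Ico_succ_bot (by omega),
        Finset.sum_eq_sum_Ico_succ_bot (by omega), Finset.Ico_add_one_right_eq_Icc]
    rw [hsplit] at hS
    rw [posCompSum_zero, posCompSum'_zero p a₀ p (by omega), posCompSum_one p p (by omega),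
      Nat.choose_eq_zero_of_lt ha, Nat.choose_zero_right, Nat.choose_one_right,
      Nat.choose_self] at hS
    simp only [if_neg (by omega : ¬ p = 0), one_mul, add_zero, zero_add] at hS
    rw [show m * (1 + posCompSum' p a₀ p 1) = m + m * posCompSum' p a₀ p 1 by ring] at hS
    omega
end

section
/- Let p, k, a₀ be natural numbers with k ≥ 1 and a₀ < p, and n = kp + a₀. Then Σ_{d=1}^{k−1} C(k−1, d) · Σ_{i=0}^{d−1} (−1)^i · C(d, i) · C((d−i)p + a₀, p) = C((k−1)p + a₀, p). -/
open Finset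

lemma inner_reindex (f : ℕ → ℤ) (d : ℕ) :
    ∑ i ∈ range d, (-1 : ℤ) ^ i * (d.choose i : ℤ) * f (d - i) =
      ∑ j ∈ Icc 1 d, (-1 : ℤ) ^ (d - j) * (d.choose j : ℤ) * f j := by
  rw [← Finset.Ico_add_one_right_eq_Icc, Finset.sum_Ico_eq_sum_range]
  rw [← Finset.sum_range_reflect]
  refine Finset.sum_congr (by rw [Nat.add_sub_cancel]) fun i hi => ?_
  simp only [Finset.mem_range] at hi
  have hle : 1 + i ≤ d := by omega
  have h1 : d - 1 - i = d - (1 + i) := by omega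
  rw [h1]
  have h2 : d - (d - (1 + i)) = 1 + i := by omega
  have h3 : d.choose (d - (1 + i)) = d.choose (1 + i) := Nat.choose_symm hle
  rw [h2, h3]

lemma inner_collapse (f : ℕ → ℤ) (K j : ℕ) (hj : j ≤ K) :
    ∑ d ∈ Icc j K, (K.choose d : ℤ) * ((-1 : ℤ) ^ (d - j) * (d.choose j : ℤ) * f j) =
      (if j = K then (K.choose j : ℤ) * f j else 0) := by
  have : ∀ d ∈ Icc j K, (K.choose d : ℤ) * ((-1 : ℤ) ^ (d - j) * (d.choose j : ℤ) * f j)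
      = (K.choose j : ℤ) * ((-1 : ℤ) ^ (d - j) * ((K - j).choose (d - j) : ℤ)) * f j := by
    intro d hd
    simp only [mem_Icc] at hd
    have hc := Nat.choose_mul (n := K) hd.1
    have : ((K.choose d * d.choose j : ℕ) : ℤ) = ((K.choose j * (K - j).choose (d - j) : ℕ) : ℤ) := by
      rw [hc]
    push_cast at this
    calc (K.choose d : ℤ) * ((-1 : ℤ) ^ (d - j) * (d.choose j : ℤ) * f j)
        = (K.choose d : ℤ) * (d.choose j : ℤ) * ((-1 : ℤ) ^ (d - j) * f j) := by ring
      _ = (K.choose j : ℤ) * ((K - j).choose (d - j) : ℤ) * ((-1 : ℤ) ^ (d - j) * f j) := by rw [this]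
      _ = (K.choose j : ℤ) * ((-1 : ℤ) ^ (d - j) * ((K - j).choose (d - j) : ℤ)) * f j := by ring
  rw [Finset.sum_congr rfl this]
  rw [← Finset.sum_mul, ← Finset.mul_sum, ← Finset.Ico_add_one_right_eq_Icc, Finset.sum_Ico_eq_sum_range]
  have hr : K + 1 - j = (K - j) + 1 := by omega
  have : ∑ i ∈ range (K + 1 - j), (-1 : ℤ) ^ (j + i - j) * ((K - j).choose (j + i - j) : ℤ)
      = ∑ i ∈ range ((K - j) + 1), (-1 : ℤ) ^ i * ((K - j).choose i : ℤ) := by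
    rw [hr]
    exact Finset.sum_congr rfl fun i _ => by rw [Nat.add_sub_cancel_left]
  rw [this, Int.alternating_sum_range_choose]
  split_ifs with h1 h2 h2
  · ring
  · exact absurd (show j = K by omega) h2
  · exact absurd (show K - j = 0 by omega) h1
  · ring

lemma collapse (f : ℕ → ℤ) (K : ℕ) (hK : 1 ≤ K) :
    ∑ d ∈ Icc 1 K, (K.choose d : ℤ) *
      ∑ i ∈ range d, (-1 : ℤ) ^ i * (d.choose i : ℤ) * f (d - i) = f K := by
  have h1 : ∀ d ∈ Icc 1 K, (K.choose d : ℤ) *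
      ∑ i ∈ range d, (-1 : ℤ) ^ i * (d.choose i : ℤ) * f (d - i)
      = ∑ j ∈ Icc 1 d, (K.choose d : ℤ) * ((-1 : ℤ) ^ (d - j) * (d.choose j : ℤ) * f j) := by
    intro d _
    rw [inner_reindex, Finset.mul_sum]
  rw [Finset.sum_congr rfl h1]
  simp only [← Finset.Ico_add_one_right_eq_Icc]
  rw [show ∀ (g : ℕ → ℕ → ℤ), (∑ d ∈ Ico 1 (K+1), ∑ j ∈ Ico 1 (d+1), g d j)
      = ∑ j ∈ Ico 1 (K+1), ∑ d ∈ Ico j (K+1), g d j from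
    fun g => (Finset.sum_Ico_Ico_comm 1 (K+1) (fun j d => g d j)).symm]
  have h2 : ∀ j ∈ Ico 1 (K+1), ∑ d ∈ Ico j (K+1),
      (K.choose d : ℤ) * ((-1 : ℤ) ^ (d - j) * (d.choose j : ℤ) * f j)
      = (if j = K then (K.choose j : ℤ) * f j else 0) := by
    intro j hj
    simp only [mem_Ico] at hj
    rw [Finset.Ico_add_one_right_eq_Icc, inner_collapse f K j (by omega)]
  rw [Finset.sum_congr rfl h2, Finset.sum_ite_eq' (Ico 1 (K+1)) K (fun j => (K.choose j : ℤ) * f j)]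
  simp [mem_Ico, hK, Nat.lt_succ_self, Nat.choose_self]

/-- The double-sum collapse in the proof of Theorem A.8. -/
theorem double_sum_collapse (p k a₀ n : ℕ) (hk : 1 ≤ k) (ha : a₀ < p)
    (hn : n = k * p + a₀) :
    ∑ d ∈ Finset.Icc 1 (k - 1),
        ((k - 1).choose d : ℤ) *
          ∑ i ∈ Finset.range d,
            (-1 : ℤ) ^ i * (d.choose i : ℤ) * (((d - i) * p + a₀).choose p : ℤ) =
      (((k - 1) * p + a₀).choose p : ℤ) := by
  rcases Nat.eq_or_lt_of_le hk with h | h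
  · subst h
    simp [Nat.choose_eq_zero_of_lt ha]
  · exact collapse (fun j => ((j * p + a₀).choose p : ℤ)) (k - 1) (by omega)
end
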